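/- arXiv:2604.11941 — 2 statements merged into one kernel-verified Lean document; each statement's English description precedes it below -/
import Mathlib

section
/- Let m ≥ 2 be an integer and let a, b, c, d ∈ ℂ be roots of unity (i.e., each satisfies ζ^{n} = 1 for some positive integer n). Then 1 − (a+b)(c+d)/m − a·b·c·d/m² ≠ 0. -/
open Complex

private lemma aux_int {x : ℂ} (hx : ∃ n : ℕ, 0 < n ∧ x ^ n = 1) : IsIntegral ℤ x := by
  obtain ⟨n, hn, h⟩ := hx
  refine ⟨Polynomial.X ^ n - Polynomial.C 1, Polynomial.monic_X_pow_sub_C 1 hn.ne', ?_⟩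
  simp [h]

private lemma aux_abs {x : ℂ} (hx : ∃ n : ℕ, 0 < n ∧ x ^ n = 1) : ‖x‖ = 1 := by
  obtain ⟨n, hn, h⟩ := hx
  exact Complex.norm_eq_one_of_pow_eq_one h hn.ne'


/-- **Nonvanishing of `1 − (a+b)(c+d)/m − abcd/m²` for roots of unity `a,b,c,d`.** -/
theorem roots_of_unity_nonvanishing
    (m : ℕ) (hm : 2 ≤ m) (a b c d : ℂ)
    (ha : ∃ n : ℕ, 0 < n ∧ a ^ n = 1) (hb : ∃ n : ℕ, 0 < n ∧ b ^ n = 1)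
    (hc : ∃ n : ℕ, 0 < n ∧ c ^ n = 1) (hd : ∃ n : ℕ, 0 < n ∧ d ^ n = 1) :
    1 - (a + b) * (c + d) / m - a * b * c * d / (m : ℂ) ^ 2 ≠ 0 := by
  intro h
  have hmR : (2:ℝ) ≤ (m:ℝ) := by exact_mod_cast hm
  have hm0 : (m : ℂ) ≠ 0 := by
    simp only [ne_eq, Nat.cast_eq_zero]; omega
  have hA := aux_abs ha
  have hB := aux_abs hb
  have hC := aux_abs hc
  have hD := aux_abs hd
  have ha0 : a ≠ 0 := by intro h0; rw [h0] at hA; simp at hA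
  have hb0 : b ≠ 0 := by intro h0; rw [h0] at hB; simp at hB
  have hc0 : c ≠ 0 := by intro h0; rw [h0] at hC; simp at hC
  have hd0 : d ≠ 0 := by intro h0; rw [h0] at hD; simp at hD
  set s : ℂ := (a + b) * (c + d) with hs_def
  set t : ℂ := a * b * c * d with ht_def
  -- the basic polynomial identity
  have ht : t = (m:ℂ)^2 - m * s := by
    have key : (m:ℂ)^2 - m * s - t = (m:ℂ)^2 * (1 - s / m - t / (m:ℂ)^2) := by
      field_simp
    rw [h, mul_zero] at key
    linear_combination -key
  have habs_t : ‖t‖ = 1 := by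
    rw [ht_def, norm_mul, norm_mul, norm_mul, hA, hB, hC, hD]; ring
  -- b/a = conj (a/b) etc.
  have hconj1 : b / a = starRingEnd ℂ (a / b) := by
    rw [← Complex.inv_eq_conj (by rw [norm_div, hA, hB]; norm_num)]
    field_simp
  have hconj2 : d / c = starRingEnd ℂ (c / d) := by
    rw [← Complex.inv_eq_conj (by rw [norm_div, hC, hD]; norm_num)]
    field_simp
  set R : ℝ := (2 + 2 * (a/b).re) * (2 + 2 * (c/d).re) with hR_def
  have hs2 : s ^ 2 = t * (R : ℂ) := by
    have e1 : s ^ 2 = t * ((2 + (a/b + b/a)) * (2 + (c/d + d/c))) := by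
      field_simp [hs_def, ht_def]
      ring
    rw [e1, hconj1, hconj2, Complex.add_conj, Complex.add_conj, hR_def]
    push_cast
    ring
  have hR0 : 0 ≤ R := by
    have h1 : |(a/b).re| ≤ 1 := by
      have := Complex.abs_re_le_norm (a/b)
      rwa [norm_div, hA, hB, div_one] at this
    have h2 : |(c/d).re| ≤ 1 := by
      have := Complex.abs_re_le_norm (c/d)
      rwa [norm_div, hC, hD, div_one] at this
    rw [abs_le] at h1 h2
    nlinarith [h1.1, h2.1]
  -- s is real
  have heq : s ^ 2 = ((m:ℂ)^2 - m * s) * (R : ℂ) := by rw [← ht]; exact hs2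
  have hsim : s.im = 0 := by
    by_contra him
    have him2 := congrArg Complex.im heq
    simp [Complex.mul_im, Complex.sub_im, Complex.mul_re, Complex.ofReal_im,
      Complex.ofReal_re, pow_two] at him2
    -- him2 : 2 * s.re * s.im = ... ; derive s.re = -(m*R)/2 ≤ 0
    have hre : 2 * s.re + (m:ℝ) * R = 0 := by
      have h0 : s.im * (2 * s.re + (m:ℝ) * R) = s.im * 0 := by linear_combination him2
      exact mul_left_cancel₀ him h0
    have hsre : s.re ≤ 0 := by nlinarith [hmR]
    -- but |t| = 1 with t = m² - m s forces s.re large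
    have hre_t := Complex.abs_re_le_norm t
    rw [habs_t] at hre_t
    have : t.re = (m:ℝ)^2 - m * s.re := by
      rw [ht]; simp [Complex.sub_re, Complex.mul_re, pow_two]
    rw [this, abs_le] at hre_t
    nlinarith [hre_t.2]
  -- t is real with |t| = 1
  have htim : t.im = 0 := by
    have := congrArg Complex.im ht
    simpa [Complex.sub_im, Complex.mul_im, Complex.mul_re, pow_two, hsim] using this
  have ht_real : t = (t.re : ℂ) := by
    apply Complex.ext <;> simp [htim]
  have habs_re : |t.re| = 1 := by
    rw [ht_real, Complex.norm_real, Real.norm_eq_abs] at habs_t; exact habs_t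
  -- integrality of s
  have hint : IsIntegral ℤ s := ((aux_int ha).add (aux_int hb)).mul ((aux_int hc).add (aux_int hd))
  -- s equals a non-integral rational: contradiction
  obtain ⟨ε, hε1, hε2⟩ : ∃ ε : ℤ, (t = (ε : ℂ)) ∧ (ε = 1 ∨ ε = -1) := by
    rcases abs_eq (by norm_num : (0:ℝ) ≤ 1) |>.mp habs_re with h1 | h1
    · exact ⟨1, by rw [ht_real, h1]; norm_num, Or.inl rfl⟩
    · exact ⟨-1, by rw [ht_real, h1]; norm_num, Or.inr rfl⟩
  set q : ℚ := ((m:ℚ)^2 - ε) / m with hq_def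
  have hmQ : (m:ℚ) ≠ 0 := by
    simp only [ne_eq, Nat.cast_eq_zero]; omega
  have hsq : s = (q : ℂ) := by
    have : (m:ℂ) * s = (m:ℂ)^2 - (ε:ℂ) := by rw [← hε1, ht]; ring
    rw [hq_def]; push_cast; rw [eq_div_iff hm0]
    linear_combination this
  have hqint : IsIntegral ℤ q := by
    rw [hsq] at hint
    have : (q : ℂ) = algebraMap ℚ ℂ q := rfl
    rw [this] at hint
    exact (isIntegral_algebraMap_iff (algebraMap ℚ ℂ).injective).mp hint
  obtain ⟨n, hn⟩ := IsIntegrallyClosed.isIntegral_iff.mp hqint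
  -- n * m = m^2 - ε in ℤ
  have : (n : ℚ) * m = (m:ℚ)^2 - ε := by
    rw [show ((n:ℚ)) = q from by rw [← hn]; rfl]
    rw [hq_def, div_mul_cancel₀ _ hmQ]
  have hZ : n * (m:ℤ) = (m:ℤ)^2 - ε := by exact_mod_cast this
  have hdvd : (m:ℤ) ∣ ε := ⟨(m:ℤ) - n, by linarith [hZ]⟩
  have : (m:ℤ) ≤ 1 := by
    rcases hε2 with rfl | rfl
    · exact Int.le_of_dvd one_pos hdvd
    · exact Int.le_of_dvd one_pos (dvd_neg.mp hdvd)
  omega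
end

section
/- Let q be a prime and let d be an integer coprime to q; write d⁻¹ for the inverse of d modulo q. For integers x, y, z define T(x,y,z;q) := ∑_{α,β,γ ∈ (ℤ/qℤ)ˣ} e( (γ·(α⁻¹ − β⁻¹) + (α·x + β·y)·d⁻¹ + γ·z)/q ). Then: (i) if q | z, T(x,y,z;q) = q·c_q(x+y) − c_q(x)·c_q(y); (ii) if q ∤ z, T(x,y,z;q) = q·e((y−x)·(z·d)⁻¹/q)·S(x·(z·d)⁻¹, −y·(z·d)⁻¹; q) − q − c_q(x)·c_q(y), where (z·d)⁻¹ denotes the inverse of z·d modulo q. -/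
open Complex
open scoped Classical

noncomputable section

/-- the additive character `e(w/q)` for `w : ZMod q` -/
def eZ (q : ℕ) [NeZero q] (w : ZMod q) : ℂ :=
  Complex.exp (2 * Real.pi * Complex.I * w.val / q)

/-- the Ramanujan sum `c_q(n)` -/
def ramanujanSum (q : ℕ) [NeZero q] (n : ZMod q) : ℂ :=
  ∑ a : (ZMod q)ˣ, eZ q ((a : ZMod q) * n)

/-- the Kloosterman sum `S(m,n;q)` -/
def kloosterman (q : ℕ) [NeZero q] (m n : ZMod q) : ℂ :=
  ∑ α : (ZMod q)ˣ, eZ q (m * (α : ZMod q) + n * ((α⁻¹ : (ZMod q)ˣ) : ZMod q))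

/-- the triple exponential sum `T(x,y,z;q)` -/
def Tsum (q : ℕ) [NeZero q] (d : ZMod q) (x y z : ZMod q) : ℂ :=
  ∑ α : (ZMod q)ˣ, ∑ β : (ZMod q)ˣ, ∑ γ : (ZMod q)ˣ,
    eZ q ((γ : ZMod q) * (((α⁻¹ : (ZMod q)ˣ) : ZMod q) - ((β⁻¹ : (ZMod q)ˣ) : ZMod q)) +
      ((α : ZMod q) * x + (β : ZMod q) * y) * d⁻¹ + (γ : ZMod q) * z)

lemma eZ_eq (q : ℕ) [NeZero q] (w : ZMod q) : eZ q w = ZMod.stdAddChar w := by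
  rw [ZMod.stdAddChar_apply, ZMod.toCircle_apply]; rfl

lemma eZ_add (q : ℕ) [NeZero q] (a b : ZMod q) : eZ q (a + b) = eZ q a * eZ q b := by
  simp [eZ_eq, AddChar.map_add_eq_mul]

lemma eZ_zero (q : ℕ) [NeZero q] : eZ q (0 : ZMod q) = 1 := by
  simp [eZ_eq]

lemma units_sum {q : ℕ} [NeZero q] (hq : Fact q.Prime) (f : ZMod q → ℂ) :
    ∑ α : (ZMod q)ˣ, f ↑α = (∑ t : ZMod q, f t) - f 0 := by
  classical
  have h1 : ∑ α : (ZMod q)ˣ, f ↑α = ∑ a : {t : ZMod q // t ≠ 0}, f ↑a :=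
    Fintype.sum_equiv unitsEquivNeZero _ _ (fun α => by simp [unitsEquivNeZero])
  have h2 : ∑ t ∈ Finset.univ.filter (· ≠ (0:ZMod q)), f t
      = ∑ a : {t : ZMod q // t ≠ 0}, f ↑a :=
    Finset.sum_subtype _ (by simp) f
  rw [h1, ← h2, Finset.filter_ne', Finset.sum_erase_eq_sub (Finset.mem_univ 0)]

lemma units_sum_eZ {q : ℕ} [NeZero q] [hq : Fact q.Prime] (w : ZMod q) :
    ∑ γ : (ZMod q)ˣ, eZ q ((γ : ZMod q) * w) = (if w = 0 then (q : ℂ) else 0) - 1 := by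
  rw [units_sum hq (fun t => eZ q (t * w))]
  simp only [eZ_eq]
  rw [AddChar.sum_mulShift w (ZMod.isPrimitive_stdAddChar q)]
  simp [ZMod.card]

lemma ramanujanSum_eq {q : ℕ} [NeZero q] [Fact q.Prime] (n : ZMod q) :
    ramanujanSum q n = (if n = 0 then (q : ℂ) else 0) - 1 := units_sum_eZ n

theorem Tsum_eval_zmod (q : ℕ) [NeZero q] (hq : q.Prime) (D : ZMod q) (hD : D ≠ 0)
    (X Y Z : ZMod q) :
    (Z = 0 → Tsum q D X Y Z =
      (q : ℂ) * ramanujanSum q (X + Y) - ramanujanSum q X * ramanujanSum q Y) ∧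
    (Z ≠ 0 → Tsum q D X Y Z =
      (q : ℂ) * eZ q ((Y - X) * (Z * D)⁻¹) *
        kloosterman q (X * (Z * D)⁻¹) (-Y * (Z * D)⁻¹)
        - q - ramanujanSum q X * ramanujanSum q Y) := by
  haveI hF : Fact q.Prime := ⟨hq⟩
  have hD' : D⁻¹ ≠ 0 := inv_ne_zero hD
  have hcond : ∀ U : ZMod q, ((if U * D⁻¹ = 0 then (q:ℂ) else 0) - 1) = ramanujanSum q U := by
    intro U; rw [ramanujanSum_eq]
    by_cases h : U = 0
    · simp [h]
    · rw [if_neg (by simp [mul_eq_zero, h, hD']), if_neg h]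
  -- step 1 : gamma sum
  have hγ : ∀ α β : (ZMod q)ˣ,
      (∑ γ : (ZMod q)ˣ, eZ q ((γ : ZMod q) * (((α⁻¹ : (ZMod q)ˣ) : ZMod q) - ((β⁻¹ : (ZMod q)ˣ) : ZMod q)) +
        ((α : ZMod q) * X + (β : ZMod q) * Y) * D⁻¹ + (γ : ZMod q) * Z))
      = (q:ℂ) * (if ((α : ZMod q)⁻¹ - (β : ZMod q)⁻¹ + Z = 0)
            then eZ q (((α : ZMod q) * X + (β : ZMod q) * Y) * D⁻¹) else 0)
        - eZ q (((α : ZMod q) * X + (β : ZMod q) * Y) * D⁻¹) := by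
    intro α β
    have harg : ∀ γ : (ZMod q)ˣ, ((γ : ZMod q) * (((α⁻¹ : (ZMod q)ˣ) : ZMod q) - ((β⁻¹ : (ZMod q)ˣ) : ZMod q)) +
        ((α : ZMod q) * X + (β : ZMod q) * Y) * D⁻¹ + (γ : ZMod q) * Z)
        = (γ : ZMod q) * ((α : ZMod q)⁻¹ - (β : ZMod q)⁻¹ + Z) + ((α : ZMod q) * X + (β : ZMod q) * Y) * D⁻¹ := by
      intro γ; rw [Units.val_inv_eq_inv_val, Units.val_inv_eq_inv_val]; ring
    calc (∑ γ : (ZMod q)ˣ, eZ q _)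
        = ∑ γ : (ZMod q)ˣ, eZ q ((γ : ZMod q) * ((α : ZMod q)⁻¹ - (β : ZMod q)⁻¹ + Z))
            * eZ q (((α : ZMod q) * X + (β : ZMod q) * Y) * D⁻¹) := by
          refine Finset.sum_congr rfl fun γ _ => ?_
          rw [harg γ, eZ_add]
      _ = ((if ((α : ZMod q)⁻¹ - (β : ZMod q)⁻¹ + Z = 0) then (q:ℂ) else 0) - 1)
            * eZ q (((α : ZMod q) * X + (β : ZMod q) * Y) * D⁻¹) := by
          rw [← Finset.sum_mul, units_sum_eZ]
      _ = _ := by split_ifs <;> ring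
  -- step 2 : T = q * A - c(x)c(y)
  have hsplit : Tsum q D X Y Z = (q:ℂ) * (∑ α : (ZMod q)ˣ, ∑ β : (ZMod q)ˣ,
      if ((α : ZMod q)⁻¹ - (β : ZMod q)⁻¹ + Z = 0)
        then eZ q (((α : ZMod q) * X + (β : ZMod q) * Y) * D⁻¹) else 0)
      - ramanujanSum q X * ramanujanSum q Y := by
    rw [Tsum]
    rw [Finset.sum_congr rfl fun α _ => Finset.sum_congr rfl fun β _ => hγ α β]
    rw [Finset.sum_congr rfl fun α (_ : α ∈ Finset.univ) => Finset.sum_sub_distrib _ _, Finset.sum_sub_distrib]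
    congr 1
    · rw [Finset.mul_sum]
      exact Finset.sum_congr rfl fun α _ => (Finset.mul_sum _ _ _).symm
    · have : ∀ α β : (ZMod q)ˣ, eZ q (((α : ZMod q) * X + (β : ZMod q) * Y) * D⁻¹)
          = eZ q ((α : ZMod q) * (X * D⁻¹)) * eZ q ((β : ZMod q) * (Y * D⁻¹)) := by
        intro α β; rw [← eZ_add]; congr 1; ring
      rw [Finset.sum_congr rfl fun α _ => Finset.sum_congr rfl fun β _ => this α β]
      rw [← Finset.sum_mul_sum, units_sum_eZ, units_sum_eZ, hcond, hcond]
  -- step 3 : inner beta sum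
  have hβ : ∀ α : (ZMod q)ˣ,
      (∑ β : (ZMod q)ˣ, if ((α : ZMod q)⁻¹ - (β : ZMod q)⁻¹ + Z = 0)
        then eZ q (((α : ZMod q) * X + (β : ZMod q) * Y) * D⁻¹) else 0)
      = (if ((α : ZMod q)⁻¹ + Z = 0) then 0
        else eZ q (((α : ZMod q) * X + ((α : ZMod q)⁻¹ + Z)⁻¹ * Y) * D⁻¹)) := by
    intro α
    have hc : ∀ β : (ZMod q)ˣ, ((α : ZMod q)⁻¹ - (β : ZMod q)⁻¹ + Z = 0)
        ↔ ((β : ZMod q) = ((α : ZMod q)⁻¹ + Z)⁻¹) := by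
      intro β
      rw [← inv_eq_iff_eq_inv]
      constructor
      · intro h; linear_combination -h
      · intro h; linear_combination -h
    calc (∑ β : (ZMod q)ˣ, if ((α : ZMod q)⁻¹ - (β : ZMod q)⁻¹ + Z = 0)
          then eZ q (((α : ZMod q) * X + (β : ZMod q) * Y) * D⁻¹) else 0)
        = ∑ β : (ZMod q)ˣ, (fun t : ZMod q => if (t = ((α : ZMod q)⁻¹ + Z)⁻¹)
            then eZ q (((α : ZMod q) * X + t * Y) * D⁻¹) else 0) ↑β := by
          refine Finset.sum_congr rfl fun β _ => ?_
          simp only [hc β]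
      _ = (∑ t : ZMod q, if (t = ((α : ZMod q)⁻¹ + Z)⁻¹)
            then eZ q (((α : ZMod q) * X + t * Y) * D⁻¹) else 0)
          - (if ((0:ZMod q) = ((α : ZMod q)⁻¹ + Z)⁻¹)
            then eZ q (((α : ZMod q) * X + 0 * Y) * D⁻¹) else 0) :=
          units_sum hF (fun t : ZMod q => if (t = ((α : ZMod q)⁻¹ + Z)⁻¹)
            then eZ q (((α : ZMod q) * X + t * Y) * D⁻¹) else 0)
      _ = eZ q (((α : ZMod q) * X + ((α : ZMod q)⁻¹ + Z)⁻¹ * Y) * D⁻¹)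
          - (if ((0:ZMod q) = ((α : ZMod q)⁻¹ + Z)⁻¹)
            then eZ q (((α : ZMod q) * X + 0 * Y) * D⁻¹) else 0) := by
          rw [Finset.sum_ite_eq' Finset.univ (((α : ZMod q)⁻¹ + Z)⁻¹)
            (fun t => eZ q (((α : ZMod q) * X + t * Y) * D⁻¹)), if_pos (Finset.mem_univ _)]
      _ = _ := by
          by_cases hw : (α : ZMod q)⁻¹ + Z = 0
          · rw [if_pos hw, hw, inv_zero, zero_mul]
            rw [if_pos rfl, sub_self]
          · rw [if_neg hw, if_neg (fun h => hw (by rw [← inv_inv ((α : ZMod q)⁻¹ + Z), ← h, inv_zero])), sub_zero]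
  rw [Finset.sum_congr rfl fun α (_ : α ∈ Finset.univ) => hβ α] at hsplit
  constructor
  · -- case q ∣ z
    intro hZ
    subst hZ
    rw [hsplit]
    congr 1
    congr 1
    rw [← hcond (X + Y), ← units_sum_eZ ((X + Y) * D⁻¹)]
    refine Finset.sum_congr rfl fun α _ => ?_
    rw [if_neg (fun h => α.ne_zero (by rwa [add_zero, inv_eq_zero] at h))]
    congr 1
    rw [add_zero, inv_inv]
    ring
  · -- case q ∤ z
    intro hZ
    rw [hsplit]
    have hA : (∑ α : (ZMod q)ˣ, (if ((α : ZMod q)⁻¹ + Z = 0) then 0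
        else eZ q (((α : ZMod q) * X + ((α : ZMod q)⁻¹ + Z)⁻¹ * Y) * D⁻¹)))
        = eZ q ((Y - X) * (Z * D)⁻¹) * kloosterman q (X * (Z * D)⁻¹) (-Y * (Z * D)⁻¹) - 1 := by
      set P : ZMod q := (Y - X) * (Z * D)⁻¹ with hP
      set M : ZMod q := X * (Z * D)⁻¹ with hM
      set N : ZMod q := -Y * (Z * D)⁻¹ with hN
      set f : ZMod q → ℂ := fun s => if (s⁻¹ + Z = 0) then 0
        else eZ q ((s * X + (s⁻¹ + Z)⁻¹ * Y) * D⁻¹) with hf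
      set g : ZMod q → ℂ := fun t => if t = 0 then 0 else eZ q (P + (M * t + N * t⁻¹)) with hg
      set ε : ZMod q ≃ ZMod q :=
        (Equiv.subRight (1 : ZMod q)).trans (Equiv.mulRight₀ Z⁻¹ (inv_ne_zero hZ)) with hε
      have hεt : ∀ t : ZMod q, ε t = (t - 1) * Z⁻¹ := fun t => rfl
      have key : ∀ t : ZMod q, t ≠ 1 → f (ε t) = g t := by
        intro t ht
        rw [hεt]
        have ht1 : t - 1 ≠ 0 := sub_ne_zero.2 ht
        have hs : ((t - 1) * Z⁻¹)⁻¹ = (t - 1)⁻¹ * Z := by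
          rw [mul_inv, inv_inv]
        have hw : ((t - 1) * Z⁻¹)⁻¹ + Z = Z * t * (t - 1)⁻¹ := by
          rw [hs]; field_simp; ring
        by_cases ht0 : t = 0
        · rw [hf, hg]; simp only
          rw [if_pos (by rw [hw, ht0]; ring), if_pos ht0]
        · rw [hf, hg]; simp only
          rw [if_neg (by rw [hw]; exact mul_ne_zero (mul_ne_zero hZ ht0) (inv_ne_zero ht1)),
            if_neg ht0]
          congr 1
          rw [hw, mul_inv, mul_inv, inv_inv, hP, hM, hN, mul_inv]
          have htt : t * t⁻¹ = 1 := mul_inv_cancel₀ ht0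
          linear_combination (Z⁻¹ * D⁻¹ * Y) * htt
      have hA' : (∑ α : (ZMod q)ˣ, f ↑α) = (∑ t : ZMod q, g t) - g 1 := by
        rw [units_sum hF f]
        have h0 : f 0 = f (ε 1) := by rw [hεt]; norm_num
        have h1 : ∀ t : ZMod q, f (ε t) = g t + (if t = 1 then f (ε 1) - g 1 else 0) := by
          intro t
          by_cases ht : t = 1
          · subst ht; rw [if_pos rfl]
            have : g 1 + (f (ε 1) - g 1) = f (ε 1) := by ring
            rw [this]
          · rw [key t ht, if_neg ht, add_zero]
        rw [← Equiv.sum_comp ε f, Finset.sum_congr rfl fun t _ => h1 t, Finset.sum_add_distrib,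
          Finset.sum_ite_eq' Finset.univ (1 : ZMod q) (fun _ => f (ε 1) - g 1),
          if_pos (Finset.mem_univ _), h0]
        ring
      have hg1 : g 1 = 1 := by
        rw [hg]; simp only
        rw [if_neg one_ne_zero, inv_one, mul_one, mul_one]
        have : P + (M + N) = 0 := by rw [hP, hM, hN]; ring
        rw [this, eZ_zero]
      have hgsum : (∑ t : ZMod q, g t) = eZ q P * kloosterman q M N := by
        have hus := units_sum hF g
        have hg0 : g 0 = 0 := by rw [hg]; simp
        rw [hg0, sub_zero] at hus
        rw [← hus, kloosterman, Finset.mul_sum]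
        refine Finset.sum_congr rfl fun α _ => ?_
        rw [hg]; simp only
        rw [if_neg α.ne_zero, eZ_add, Units.val_inv_eq_inv_val]
      calc (∑ α : (ZMod q)ˣ, f ↑α) = (∑ t : ZMod q, g t) - g 1 := hA'
        _ = eZ q P * kloosterman q M N - 1 := by rw [hgsum, hg1]
    rw [hA]
    ring

/-- **Evaluation of the triple exponential sum `T(x,y,z;q)`.** -/
theorem Tsum_eval (q : ℕ) [NeZero q] (hq : q.Prime) (d : ℤ) (hd : IsCoprime d (q : ℤ))
    (x y z : ℤ) :
    ((q : ℤ) ∣ z →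
      Tsum q (d : ZMod q) (x : ZMod q) (y : ZMod q) (z : ZMod q) =
        (q : ℂ) * ramanujanSum q ((x + y : ℤ) : ZMod q) -
          ramanujanSum q (x : ZMod q) * ramanujanSum q (y : ZMod q)) ∧
    (¬ (q : ℤ) ∣ z →
      Tsum q (d : ZMod q) (x : ZMod q) (y : ZMod q) (z : ZMod q) =
        (q : ℂ) * eZ q (((y - x : ℤ) : ZMod q) * (((z : ZMod q) * (d : ZMod q))⁻¹)) *
            kloosterman q ((x : ZMod q) * (((z : ZMod q) * (d : ZMod q))⁻¹))
              (-(y : ZMod q) * (((z : ZMod q) * (d : ZMod q))⁻¹)) -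
          (q : ℂ) - ramanujanSum q (x : ZMod q) * ramanujanSum q (y : ZMod q)) := by
  haveI : Fact q.Prime := ⟨hq⟩
  have hD : (d : ZMod q) ≠ 0 := by
    obtain ⟨a, b, hab⟩ := hd
    intro h0
    have h1 : ((a * d + b * q : ℤ) : ZMod q) = 1 := by rw [hab]; exact Int.cast_one
    rw [Int.cast_add, Int.cast_mul, Int.cast_mul, h0, mul_zero] at h1
    rw [Int.cast_natCast, ZMod.natCast_self, mul_zero, add_zero] at h1
    exact one_ne_zero h1.symm
  obtain ⟨h1, h2⟩ := Tsum_eval_zmod q hq (d : ZMod q) hD (x : ZMod q) (y : ZMod q) (z : ZMod q)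
  constructor
  · intro hz
    rw [h1 ((ZMod.intCast_zmod_eq_zero_iff_dvd z q).2 hz)]
    push_cast
    ring
  · intro hz
    rw [h2 (fun h => hz ((ZMod.intCast_zmod_eq_zero_iff_dvd z q).1 h))]
    push_cast
    ring

end
end
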